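/- With rational coefficients, the pullback homomorphism Λ* : PP[Σ;ℚ] → PP[K̂;ℚ] is an isomorphism of ℚ-algebras; its inverse sends a family (g_τ)_{τ∈K} to the family (f_σ)_{σ maximal} where f_σ is obtained from g_σ by the linear change of variables inverse to the substitution φ_σ (i.e., f_σ(u) = g_σ(Λ_σ^{−1}u), where Λ_σ is the invertible matrix over ℚ with columns λ_i, i ∈ σ). -/

import Mathlib

noncomputable section

open MvPolynomial

/-- Restriction of a polynomial to a face `σ`: substitute `x i = 0` for every `i ∉ σ`. -/
def restrictFace (k : Type*) [CommRing k] {m : ℕ} (σ : Finset (Fin m)) :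
    MvPolynomial (Fin m) k →ₐ[k] MvPolynomial (Fin m) k :=
  aeval (fun i => if i ∈ σ then X i else 0)

/-- `K` is a simplicial complex on the vertex set `{1, …, m}`. -/
def IsSimplicialComplex {m : ℕ} (K : Set (Finset (Fin m))) : Prop :=
  ∅ ∈ K ∧ ∀ σ ∈ K, ∀ τ, τ ⊆ σ → τ ∈ K

/-- `K` is pure of rank `n`. -/
def IsPureOfRank {m : ℕ} (K : Set (Finset (Fin m))) (n : ℕ) : Prop :=
  ∀ σ ∈ K, ∃ τ ∈ K, σ ⊆ τ ∧ τ.card = n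

/-- The maximal faces (the faces of cardinality `n`) of `K`. -/
abbrev MaxFace {m : ℕ} (K : Set (Finset (Fin m))) (n : ℕ) : Type _ :=
  {s : Finset (Fin m) // s ∈ K ∧ s.card = n}

/-- The algebra `PP[K̂;k]` of piecewise polynomials on the pulled-back fan `K̂`. -/
def PPhat (k : Type*) [CommRing k] {m : ℕ} (K : Set (Finset (Fin m))) :
    Subalgebra k ((σ : K) → MvPolynomial (Fin m) k) :=
  (⨅ σ : K, (MvPolynomial.supported k (((σ : Finset (Fin m)) : Set (Fin m)))).comap
      (Pi.evalAlgHom k (fun _ : K => MvPolynomial (Fin m) k) σ)) ⊓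
  ⨅ (σ : K) (τ : K) (_ : (τ : Finset (Fin m)) ⊆ (σ : Finset (Fin m))),
    AlgHom.equalizer (Pi.evalAlgHom k (fun _ : K => MvPolynomial (Fin m) k) τ)
      ((restrictFace k (τ : Finset (Fin m))).comp
        (Pi.evalAlgHom k (fun _ : K => MvPolynomial (Fin m) k) σ))

/-- The substitution `φ_τ : k[u_1,…,u_n] → k[x_1,…,x_m]`,
`u_j ↦ ∑_{i ∈ τ} (λ_i)_j x_i`, attached to a face `τ` and ray data `L i = λ_i ∈ ℤⁿ`. -/
def phiFace (k : Type*) [CommRing k] {m n : ℕ} (L : Fin m → Fin n → ℤ) (τ : Finset (Fin m)) :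
    MvPolynomial (Fin n) k →ₐ[k] MvPolynomial (Fin m) k :=
  aeval (fun j : Fin n => ∑ i ∈ τ, (C ((L i j : ℤ) : k)) * X i)

/-- The algebra `PP[Σ;k]` of piecewise polynomials on the simplicial fan `Σ` determined
by `(K, L)`: families `(f_σ)_{σ maximal}` with
`φ_{σ∩σ'}(f_σ) = φ_{σ∩σ'}(f_{σ'})` for all maximal `σ, σ'`; operations componentwise. -/
def PPSigma (k : Type*) [CommRing k] {m n : ℕ} (K : Set (Finset (Fin m)))
    (L : Fin m → Fin n → ℤ) :
    Subalgebra k ((σ : MaxFace K n) → MvPolynomial (Fin n) k) :=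
  ⨅ (σ : MaxFace K n) (σ' : MaxFace K n),
    AlgHom.equalizer
      ((phiFace k L ((σ : Finset (Fin m)) ∩ (σ' : Finset (Fin m)))).comp
        (Pi.evalAlgHom k (fun _ : MaxFace K n => MvPolynomial (Fin n) k) σ))
      ((phiFace k L ((σ : Finset (Fin m)) ∩ (σ' : Finset (Fin m)))).comp
        (Pi.evalAlgHom k (fun _ : MaxFace K n => MvPolynomial (Fin n) k) σ'))

/-- The pullback homomorphism `Λ* : PP[Σ;k] → PP[K̂;k]`, whose component at a face
`τ ∈ K` is `φ_τ(f_σ)` for a (chosen) maximal face `σ ⊇ τ`. -/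
def lambdaStar (k : Type*) [CommRing k] {m n : ℕ} (K : Set (Finset (Fin m)))
    (L : Fin m → Fin n → ℤ) (cmax : K → MaxFace K n) :
    ((σ : MaxFace K n) → MvPolynomial (Fin n) k) →ₐ[k] ((τ : K) → MvPolynomial (Fin m) k) :=
  Pi.algHom _ _ (fun τ : K =>
    (phiFace k L (τ : Finset (Fin m))).comp
      (Pi.evalAlgHom k (fun _ : MaxFace K n => MvPolynomial (Fin n) k) (cmax τ)))

/-! ### Auxiliary lemmas -/

section Aux

variable {m n : ℕ}

lemma restrictFace_comp_phiFace (L : Fin m → Fin n → ℤ) {τ ρ : Finset (Fin m)} (h : τ ⊆ ρ)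
    (p : MvPolynomial (Fin n) ℚ) :
    restrictFace ℚ τ (phiFace ℚ L ρ p) = phiFace ℚ L τ p := by
  have key : (restrictFace ℚ τ).comp (phiFace ℚ L ρ) = phiFace ℚ L τ := by
    apply MvPolynomial.algHom_ext
    intro j
    simp only [AlgHom.comp_apply, phiFace, aeval_X, map_sum, map_mul, aeval_C,
      restrictFace, algebraMap_eq, mul_ite, mul_zero]
    rw [Finset.sum_ite_mem, Finset.inter_eq_right.mpr h]
  exact congrFun (congrArg DFunLike.coe key) p

lemma phiFace_mem_supported (L : Fin m → Fin n → ℤ) (τ : Finset (Fin m))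
    (p : MvPolynomial (Fin n) ℚ) :
    phiFace ℚ L τ p ∈ supported ℚ ((τ : Finset (Fin m)) : Set (Fin m)) := by
  induction p using MvPolynomial.induction_on with
  | C a => simpa [phiFace, algebraMap_eq] using Subalgebra.algebraMap_mem (supported ℚ ((τ : Finset (Fin m)) : Set (Fin m))) a
  | add p q hp hq => rw [map_add]; exact add_mem hp hq
  | mul_X p j hp =>
      rw [map_mul]
      refine mul_mem hp ?_
      simp only [phiFace, aeval_X]
      refine Subalgebra.sum_mem _ fun i hi => Subalgebra.mul_mem _ ?_ ?_
      · simpa [algebraMap_eq] using Subalgebra.algebraMap_mem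
          (supported ℚ ((τ : Finset (Fin m)) : Set (Fin m))) (((L i j : ℤ) : ℚ))
      · exact Algebra.subset_adjoin ⟨i, hi, rfl⟩

lemma restrictFace_of_mem (σ : Finset (Fin m)) {p : MvPolynomial (Fin m) ℚ}
    (hp : p ∈ supported ℚ ((σ : Finset (Fin m)) : Set (Fin m))) :
    restrictFace ℚ σ p = p := by
  have hEq : Set.EqOn (restrictFace ℚ σ) (AlgHom.id ℚ (MvPolynomial (Fin m) ℚ))
      (Algebra.adjoin ℚ (X '' ((σ : Finset (Fin m)) : Set (Fin m))) :
        Subalgebra ℚ (MvPolynomial (Fin m) ℚ)) := by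
    rw [AlgHom.eqOn_adjoin_iff]
    rintro _ ⟨i, hi, rfl⟩
    simp [restrictFace, Finset.mem_coe.mp hi]
  exact hEq hp

lemma exists_psi (L : Fin m → Fin n → ℤ) (σ : Finset (Fin m)) (hcard : σ.card = n)
    (hLI : LinearIndependent ℚ
      (fun i : {x : Fin m // x ∈ σ} => fun j : Fin n => ((L i j : ℤ) : ℚ))) :
    ∃ ψ : MvPolynomial (Fin m) ℚ →ₐ[ℚ] MvPolynomial (Fin n) ℚ,
      (∀ p, ψ (phiFace ℚ L σ p) = p) ∧
      (∀ p, phiFace ℚ L σ (ψ p) = restrictFace ℚ σ p) := by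
  classical
  obtain ⟨e⟩ : Nonempty ({x : Fin m // x ∈ σ} ≃ Fin n) := ⟨σ.equivFinOfCardEq hcard⟩
  set A : Matrix (Fin n) (Fin n) ℚ :=
    Matrix.of (fun r c => ((L (e.symm r) c : ℤ) : ℚ)) with hA
  have hAunit : IsUnit A := by
    rw [← Matrix.linearIndependent_rows_iff_isUnit]
    exact hLI.comp e.symm e.symm.injective
  have hdet : IsUnit A.det := (Matrix.isUnit_iff_isUnit_det A).mp hAunit
  set B := A⁻¹ with hB
  have hAB : A * B = 1 := Matrix.mul_nonsing_inv A hdet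
  have hBA : B * A = 1 := Matrix.nonsing_inv_mul A hdet
  have hAentry : ∀ (r c : Fin n), A r c = ((L (e.symm r) c : ℤ) : ℚ) := fun r c => rfl
  set ψ : MvPolynomial (Fin m) ℚ →ₐ[ℚ] MvPolynomial (Fin n) ℚ :=
    aeval (fun i =>
      if h : i ∈ σ then ∑ j' : Fin n, C (B j' (e ⟨i, h⟩)) * X j' else 0) with hψ
  have hψX : ∀ (x : {x : Fin m // x ∈ σ}),
      ψ (X (x : Fin m)) = ∑ j' : Fin n, C (B j' (e x)) * X j' := by
    intro x
    rw [hψ, aeval_X, dif_pos x.2]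
  have hφX : ∀ (j : Fin n),
      phiFace ℚ L σ (X j) = ∑ r : Fin n, C (A r j) * X ((e.symm r : {x : Fin m // x ∈ σ}) : Fin m) := by
    intro j
    rw [phiFace, aeval_X,
      ← Finset.sum_attach σ (fun i => C ((L i j : ℤ) : ℚ) * X i), ← Finset.univ_eq_attach,
      ← Equiv.sum_comp e.symm
        (fun x : {x : Fin m // x ∈ σ} => C ((L (x : Fin m) j : ℤ) : ℚ) * X (x : Fin m))]
    rfl
  refine ⟨ψ, ?_, ?_⟩
  · -- ψ ∘ φ = id
    have hcomp : ψ.comp (phiFace ℚ L σ) = AlgHom.id ℚ (MvPolynomial (Fin n) ℚ) := by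
      apply MvPolynomial.algHom_ext
      intro j
      rw [AlgHom.comp_apply, AlgHom.id_apply, hφX, map_sum]
      have hterm : ∀ r : Fin n,
          ψ (C (A r j) * X ((e.symm r : {x : Fin m // x ∈ σ}) : Fin m)) =
          ∑ j' : Fin n, C (B j' r * A r j) * X j' := by
        intro r
        rw [map_mul, hψX (e.symm r), Equiv.apply_symm_apply]
        rw [show ψ (C (A r j)) = C (A r j) by rw [hψ]; simp [algebraMap_eq]]
        rw [Finset.mul_sum]
        refine Finset.sum_congr rfl fun j' _ => ?_
        rw [← mul_assoc, ← map_mul, mul_comm (A r j)]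
      rw [Finset.sum_congr rfl fun r _ => hterm r, Finset.sum_comm]
      have hsum : ∀ j' : Fin n, (∑ r : Fin n, C (B j' r * A r j) * X j') =
          C ((B * A) j' j) * X j' := by
        intro j'
        rw [← Finset.sum_mul, ← map_sum, Matrix.mul_apply]
      rw [Finset.sum_congr rfl fun j' _ => hsum j', hBA]
      simp [Matrix.one_apply, apply_ite C, ite_mul]
    exact fun p => by simpa using DFunLike.congr_fun hcomp p
  · -- φ ∘ ψ = restrictFace
    have hcomp : (phiFace ℚ L σ).comp ψ = restrictFace ℚ σ := by
      apply MvPolynomial.algHom_ext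
      intro i
      rw [AlgHom.comp_apply]
      by_cases h : i ∈ σ
      · rw [show ψ (X i) = ∑ j' : Fin n, C (B j' (e ⟨i, h⟩)) * X j' from hψX ⟨i, h⟩]
        rw [show restrictFace ℚ σ (X i) = X i by simp [restrictFace, h]]
        rw [map_sum]
        have hterm : ∀ j' : Fin n,
            phiFace ℚ L σ (C (B j' (e ⟨i, h⟩)) * X j') =
            ∑ r' : Fin n, C (A r' j' * B j' (e ⟨i, h⟩)) *
              X ((e.symm r' : {x : Fin m // x ∈ σ}) : Fin m) := by
          intro j'
          rw [map_mul, hφX j']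
          rw [show phiFace ℚ L σ (C (B j' (e ⟨i, h⟩))) = C (B j' (e ⟨i, h⟩)) by
            simp [phiFace, algebraMap_eq]]
          rw [Finset.mul_sum]
          refine Finset.sum_congr rfl fun r' _ => ?_
          rw [← mul_assoc, ← map_mul, mul_comm (B j' (e ⟨i, h⟩))]
        rw [Finset.sum_congr rfl fun j' _ => hterm j', Finset.sum_comm]
        have hsum : ∀ r' : Fin n,
            (∑ j' : Fin n, C (A r' j' * B j' (e ⟨i, h⟩)) *
              X ((e.symm r' : {x : Fin m // x ∈ σ}) : Fin m)) =
            C ((A * B) r' (e ⟨i, h⟩)) * X ((e.symm r' : {x : Fin m // x ∈ σ}) : Fin m) := by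
          intro r'
          rw [← Finset.sum_mul, ← map_sum, Matrix.mul_apply]
        rw [Finset.sum_congr rfl fun r' _ => hsum r', hAB]
        have hcollapse : ∀ r' : Fin n,
            C ((1 : Matrix (Fin n) (Fin n) ℚ) r' (e ⟨i, h⟩)) *
              X ((e.symm r' : {x : Fin m // x ∈ σ}) : Fin m) =
            if r' = e ⟨i, h⟩ then X ((e.symm r' : {x : Fin m // x ∈ σ}) : Fin m) else 0 := by
          intro r'
          rw [Matrix.one_apply]
          split <;> simp
        rw [Finset.sum_congr rfl fun r' _ => hcollapse r',
          Finset.sum_ite_eq' Finset.univ (e ⟨i, h⟩)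
            (fun r' => X ((e.symm r' : {x : Fin m // x ∈ σ}) : Fin m)),
          if_pos (Finset.mem_univ _), Equiv.symm_apply_apply]
      · rw [show ψ (X i) = 0 by rw [hψ, aeval_X, dif_neg h], map_zero]
        simp [restrictFace, h]
    exact fun p => DFunLike.congr_fun hcomp p

end Aux

section MemIff

variable {m n : ℕ} {K : Set (Finset (Fin m))} {L : Fin m → Fin n → ℤ}

lemma mem_PPhat_iff {g : (τ : K) → MvPolynomial (Fin m) ℚ} :
    g ∈ PPhat ℚ K ↔
      ((∀ τ : K, g τ ∈ supported ℚ (((τ : Finset (Fin m)) : Set (Fin m)))) ∧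
       ∀ σ τ : K, (τ : Finset (Fin m)) ⊆ (σ : Finset (Fin m)) →
         g τ = restrictFace ℚ (τ : Finset (Fin m)) (g σ)) := by
  simp [PPhat, Algebra.mem_inf, Algebra.mem_iInf, Subalgebra.mem_comap,
    AlgHom.mem_equalizer]

lemma mem_PPSigma_iff {f : (σ : MaxFace K n) → MvPolynomial (Fin n) ℚ} :
    f ∈ PPSigma ℚ K L ↔
      ∀ σ σ' : MaxFace K n,
        phiFace ℚ L ((σ : Finset (Fin m)) ∩ (σ' : Finset (Fin m))) (f σ) =
        phiFace ℚ L ((σ : Finset (Fin m)) ∩ (σ' : Finset (Fin m))) (f σ') := by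
  simp [PPSigma, Algebra.mem_iInf, AlgHom.mem_equalizer]

lemma lambdaStar_apply (cmax : K → MaxFace K n)
    (f : (σ : MaxFace K n) → MvPolynomial (Fin n) ℚ) (τ : K) :
    lambdaStar ℚ K L cmax f τ = phiFace ℚ L (τ : Finset (Fin m)) (f (cmax τ)) := rfl

end MemIff

/-- Over `ℚ`, the pullback homomorphism `Λ* : PP[Σ;ℚ] → PP[K̂;ℚ]` is an isomorphism of
`ℚ`-algebras: it maps `PP[Σ;ℚ]` bijectively onto `PP[K̂;ℚ]`, and its inverse sends a
family `(g_τ)` to the family `(f_σ)` with `f_σ(u) = g_σ(Λ_σ⁻¹ u)`, i.e. with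
`φ_σ(f_σ) = g_σ` for every maximal face `σ` (second clause below). -/
theorem lambdaStar_bijective_rat {m n : ℕ} (K : Set (Finset (Fin m)))
    (L : Fin m → Fin n → ℤ)
    (hK : IsSimplicialComplex K)
    (hind : ∀ σ ∈ K, LinearIndependent ℚ
      (fun i : {x : Fin m // x ∈ σ} => fun j : Fin n => ((L i j : ℤ) : ℚ)))
    (hpure : IsPureOfRank K n)
    (cmax : K → MaxFace K n)
    (hcmax : ∀ τ : K, (τ : Finset (Fin m)) ⊆ ((cmax τ : MaxFace K n) : Finset (Fin m))) :
    Set.BijOn (lambdaStar ℚ K L cmax) (PPSigma ℚ K L) (PPhat ℚ K) ∧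
    ∀ f ∈ PPSigma ℚ K L, ∀ σ : MaxFace K n,
      lambdaStar ℚ K L cmax f (⟨(σ : Finset (Fin m)), σ.2.1⟩ : K) =
        phiFace ℚ L (σ : Finset (Fin m)) (f σ) := by
  classical
  choose ψ hψ1 hψ2 using fun σ : MaxFace K n => exists_psi L σ.1 σ.2.2 (hind σ.1 σ.2.1)
  -- clause 2
  have clause2 : ∀ f ∈ PPSigma ℚ K L, ∀ σ : MaxFace K n,
      lambdaStar ℚ K L cmax f (⟨(σ : Finset (Fin m)), σ.2.1⟩ : K) =
        phiFace ℚ L (σ : Finset (Fin m)) (f σ) := by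
    intro f hf σ
    set τ : K := ⟨σ.1, σ.2.1⟩ with hτ
    have h := (mem_PPSigma_iff.mp hf) σ (cmax τ)
    have hsub : σ.1 ⊆ ((cmax τ).1 : Finset (Fin m)) := hcmax τ
    rw [Finset.inter_eq_left.mpr hsub] at h
    rw [lambdaStar_apply]
    exact h.symm
  refine ⟨⟨?_, ?_, ?_⟩, clause2⟩
  · -- MapsTo
    intro f hf
    rw [SetLike.mem_coe, mem_PPhat_iff]
    constructor
    · intro τ
      rw [lambdaStar_apply]
      exact phiFace_mem_supported L τ.1 _
    · intro σ τ hsub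
      rw [lambdaStar_apply, lambdaStar_apply, restrictFace_comp_phiFace L hsub]
      -- φ_τ (f (cmax σ)) = φ_τ (f (cmax τ)) ... we need the reverse orientation
      have h := (mem_PPSigma_iff.mp hf) (cmax σ) (cmax τ)
      have hτρ : τ.1 ⊆ ((cmax σ).1 : Finset (Fin m)) ∩ ((cmax τ).1 : Finset (Fin m)) :=
        Finset.subset_inter (hsub.trans (hcmax σ)) (hcmax τ)
      have := congrArg (restrictFace ℚ τ.1) h
      rw [restrictFace_comp_phiFace L hτρ, restrictFace_comp_phiFace L hτρ] at this
      exact this.symm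
  · -- InjOn
    intro f hf f' hf' heq
    funext σ
    have h1 := clause2 f hf σ
    have h2 := clause2 f' hf' σ
    have : phiFace ℚ L σ.1 (f σ) = phiFace ℚ L σ.1 (f' σ) := by
      rw [← h1, ← h2, heq]
    have := congrArg (ψ σ) this
    rwa [hψ1 σ, hψ1 σ] at this
  · -- SurjOn
    intro g hg
    obtain ⟨hg1, hg2⟩ := mem_PPhat_iff.mp hg
    set f : (σ : MaxFace K n) → MvPolynomial (Fin n) ℚ :=
      fun σ => ψ σ (g ⟨σ.1, σ.2.1⟩) with hfdef
    have hphif : ∀ σ : MaxFace K n, phiFace ℚ L σ.1 (f σ) = g ⟨σ.1, σ.2.1⟩ := by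
      intro σ
      rw [hfdef, hψ2 σ]
      exact restrictFace_of_mem σ.1 (hg1 ⟨σ.1, σ.2.1⟩)
    have hmem : f ∈ PPSigma ℚ K L := by
      rw [mem_PPSigma_iff]
      intro σ σ'
      have hρK : σ.1 ∩ σ'.1 ∈ K := hK.2 σ.1 σ.2.1 _ Finset.inter_subset_left
      have h1 : phiFace ℚ L (σ.1 ∩ σ'.1) (f σ) = g ⟨σ.1 ∩ σ'.1, hρK⟩ := by
        rw [← restrictFace_comp_phiFace L (Finset.inter_subset_left (s₂ := σ'.1)) (f σ),
          hphif σ]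
        exact (hg2 ⟨σ.1, σ.2.1⟩ ⟨σ.1 ∩ σ'.1, hρK⟩ Finset.inter_subset_left).symm
      have h2 : phiFace ℚ L (σ.1 ∩ σ'.1) (f σ') = g ⟨σ.1 ∩ σ'.1, hρK⟩ := by
        rw [← restrictFace_comp_phiFace L (Finset.inter_subset_right (s₁ := σ.1)) (f σ'),
          hphif σ']
        exact (hg2 ⟨σ'.1, σ'.2.1⟩ ⟨σ.1 ∩ σ'.1, hρK⟩ Finset.inter_subset_right).symm
      rw [h1, h2]
    refine ⟨f, hmem, ?_⟩
    funext τ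
    rw [lambdaStar_apply]
    have hsub : τ.1 ⊆ ((cmax τ).1 : Finset (Fin m)) := hcmax τ
    rw [← restrictFace_comp_phiFace L hsub (f (cmax τ)), hphif (cmax τ)]
    exact (hg2 ⟨((cmax τ).1 : Finset (Fin m)), (cmax τ).2.1⟩ τ hsub).symm
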